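/- Let l ≥ 4 be an integer with l ≡ 4 (mod 6), and let H be a tournament on 4 vertices such that the directed cycle of length l admits a homomorphism to H. Then H is isomorphic to the tournament T4 on vertex set {1,2,3,4} with arcs 1→2, 1→3, 2→3, 2→4, 3→4, 4→1. -/

import Mathlib

/-- An oriented graph: no loops, no pair of opposite arcs. -/
structure OrientedGraph (V : Type*) where
  arc : V → V → Prop
  irrefl : ∀ v, ¬ arc v v
  asymm : ∀ u v, arc u v → ¬ arc v u

/-- The underlying simple graph of an oriented graph. -/
def OrientedGraph.underlying {V : Type*} (G : OrientedGraph V) : SimpleGraph V where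
  Adj u v := G.arc u v ∨ G.arc v u
  symm := ⟨fun _ _ h => h.symm⟩
  loopless := ⟨fun v h => h.elim (G.irrefl v) (G.irrefl v)⟩

/-- Homomorphisms of oriented graphs. -/
def OrientedGraph.IsHom {V W : Type*} (G : OrientedGraph V) (H : OrientedGraph W)
    (φ : V → W) : Prop :=
  ∀ u v, G.arc u v → H.arc (φ u) (φ v)

/-- The tournament `T4` on vertex set `{1, 2, 3, 4}` (represented by `Fin 4`, with
vertex `k+1` represented by `k`) with arcs `1→2, 1→3, 2→3, 2→4, 3→4, 4→1`. -/
def T4 : OrientedGraph (Fin 4) where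
  arc a b := (a = 0 ∧ b = 1) ∨ (a = 0 ∧ b = 2) ∨ (a = 1 ∧ b = 2) ∨
    (a = 1 ∧ b = 3) ∨ (a = 2 ∧ b = 3) ∨ (a = 3 ∧ b = 0)
  irrefl := by decide
  asymm := by decide

lemma walk_key {W : Type} [Fintype W] (hcard : Fintype.card W = 4) (H : OrientedGraph W) :
    ∀ n : ℕ, ¬ (3 ∣ n) → ∀ ψ : ℕ → W, (∀ i, H.arc (ψ i) (ψ (i + 1))) → ψ n = ψ 0 →
    ∃ p q r s : W, p ≠ r ∧ q ≠ s ∧ H.arc p q ∧ H.arc q r ∧ H.arc r s ∧ H.arc s p := by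
  intro n
  induction n using Nat.strong_induction_on with
  | _ n ih =>
    intro h3 ψ hstep hclosed
    rcases lt_or_ge n 5 with hn | hn
    · interval_cases n
      · exact absurd (dvd_zero 3) h3
      · exact absurd (hclosed ▸ hstep 0) (H.irrefl _)
      · have h0 := hstep 0
        have h1 := hstep 1
        rw [hclosed] at h1
        exact absurd h1 (H.asymm _ _ h0)
      · exact absurd ⟨1, rfl⟩ h3
      · refine ⟨ψ 0, ψ 1, ψ 2, ψ 3, ?_, ?_, hstep 0, hstep 1, hstep 2, hclosed ▸ hstep 3⟩
        · intro h
          have h1 := hstep 1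
          rw [← h] at h1
          exact H.asymm _ _ (hstep 0) h1
        · intro h
          have h2 := hstep 2
          rw [← h] at h2
          exact H.asymm _ _ (hstep 1) h2
    · have h5 : Fintype.card W < Fintype.card (Fin n) := by simp [hcard]; omega
      obtain ⟨a, b, hab, heq⟩ :=
        Fintype.exists_ne_map_eq_of_card_lt (fun k : Fin n => ψ (k : ℕ)) h5
      -- normalize so i < j
      obtain ⟨i, j, hij, hjn, hψ⟩ : ∃ i j : ℕ, i < j ∧ j < n ∧ ψ i = ψ j := by
        rcases lt_or_gt_of_ne (fun h => hab (Fin.ext (by exact_mod_cast congrArg Fin.val h))) with h | h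
        · exact ⟨a, b, by exact_mod_cast h, b.isLt, heq⟩
        · exact ⟨b, a, by exact_mod_cast h, a.isLt, heq.symm⟩
      set d := j - i with hd
      have hd1 : 1 ≤ d := by omega
      have hdn : d < n := by omega
      by_cases h3d : 3 ∣ d
      · -- recurse on the outer walk of length n - d
        have h3' : ¬ 3 ∣ (n - d) := by omega
        refine ih (n - d) (by omega) h3' (fun k => if k ≤ i then ψ k else ψ (k + d)) ?_ ?_
        · intro k
          rcases lt_trichotomy k i with h | h | h
          · simp only [if_pos h.le, if_pos (by omega : k + 1 ≤ i)]
            exact hstep k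
          · subst h
            simp only [if_pos le_rfl, if_neg (by omega : ¬ k + 1 ≤ k)]
            have : k + 1 + d = j + 1 := by omega
            rw [this, hψ]
            exact hstep j
          · simp only [if_neg (by omega : ¬ k ≤ i), if_neg (by omega : ¬ k + 1 ≤ i)]
            have : k + 1 + d = k + d + 1 := by omega
            rw [this]
            exact hstep (k + d)
        · simp only [if_neg (by omega : ¬ n - d ≤ i), if_pos (Nat.zero_le i)]
          have : n - d + d = n := by omega
          rw [this, hclosed]
      · -- recurse on the inner walk of length d
        refine ih d hdn h3d (fun k => ψ (i + k)) (fun k => by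
          show H.arc (ψ (i + k)) (ψ (i + (k + 1)))
          have : i + (k + 1) = i + k + 1 := by omega
          rw [this]; exact hstep (i + k)) ?_
        show ψ (i + d) = ψ (i + 0)
        have : i + d = j := by omega
        rw [this, Nat.add_zero, hψ]

lemma iso_T4 {W : Type} [Fintype W] (hcard : Fintype.card W = 4) (H : OrientedGraph W)
    (p q r s : W) (hpq : H.arc p q) (hqr : H.arc q r) (hrs : H.arc r s)
    (hsp : H.arc s p) (hpr : H.arc p r) (hqs : H.arc q s) :
    ∃ e : W ≃ Fin 4, ∀ u v, H.arc u v ↔ T4.arc (e u) (e v) := by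
  have hne : ∀ {a b : W}, H.arc a b → a ≠ b := by
    rintro a b h rfl; exact H.irrefl a h
  set g : Fin 4 → W := ![p, q, r, s] with hg
  have npq := hne hpq
  have nqr := hne hqr
  have nrs := hne hrs
  have nsp := hne hsp
  have npr := hne hpr
  have nqs := hne hqs
  have npq' := npq.symm
  have nqr' := nqr.symm
  have nrs' := nrs.symm
  have nsp' := nsp.symm
  have npr' := npr.symm
  have nqs' := nqs.symm
  have hinj : Function.Injective g := by
    intro i j
    fin_cases i <;> fin_cases j <;> simp [g] <;> assumption
  have hbij : Function.Bijective g :=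
    (Fintype.bijective_iff_injective_and_card g).mpr ⟨hinj, by simp [hcard]⟩
  have harc : ∀ i j : Fin 4, H.arc (g i) (g j) ↔ T4.arc i j := by
    have h1 := H.asymm _ _ hpq
    have h2 := H.asymm _ _ hqr
    have h3 := H.asymm _ _ hrs
    have h4 := H.asymm _ _ hsp
    have h5 := H.asymm _ _ hpr
    have h6 := H.asymm _ _ hqs
    have i1 := H.irrefl p
    have i2 := H.irrefl q
    have i3 := H.irrefl r
    have i4 := H.irrefl s
    intro i j
    fin_cases i <;> fin_cases j <;>
      simp [g, T4] <;> assumption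
  refine ⟨(Equiv.ofBijective g hbij).symm, fun u v => ?_⟩
  have hu : g ((Equiv.ofBijective g hbij).symm u) = u := (Equiv.ofBijective g hbij).apply_symm_apply u
  have hv : g ((Equiv.ofBijective g hbij).symm v) = v := (Equiv.ofBijective g hbij).apply_symm_apply v
  rw [← harc]
  rw [hu, hv]

/-- For `l ≥ 4` with `l ≡ 4 (mod 6)`, every tournament on 4 vertices
admitting a homomorphism from the directed cycle of length `l` is isomorphic to `T4`. -/
theorem tournament_with_hom_from_directed_cycle_iso_T4 (l : ℕ) (hl : 4 ≤ l)
    (hmod : l % 6 = 4) (W : Type) [Fintype W] (hcard : Fintype.card W = 4)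
    (H : OrientedGraph W) (htour : ∀ u v : W, u ≠ v → H.arc u v ∨ H.arc v u)
    (hhom : ∃ φ : ℕ → W, ∀ i < l, H.arc (φ i) (φ ((i + 1) % l))) :
    ∃ e : W ≃ Fin 4, ∀ u v : W, H.arc u v ↔ T4.arc (e u) (e v) := by
  classical
  obtain ⟨φ, hφ⟩ := hhom
  set ψ : ℕ → W := fun i => φ (i % l) with hψdef
  have hstep : ∀ i, H.arc (ψ i) (ψ (i + 1)) := by
    intro i
    have h1 : i % l < l := Nat.mod_lt _ (by omega)
    have h2 := hφ (i % l) h1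
    have h3 : (i + 1) % l = (i % l + 1) % l := by
      rw [Nat.add_mod i 1 l, Nat.mod_eq_of_lt (by omega : 1 < l)]
    show H.arc (φ (i % l)) (φ ((i + 1) % l))
    rw [h3]
    exact h2
  have hclosed : ψ l = ψ 0 := by
    show φ (l % l) = φ (0 % l)
    rw [Nat.mod_self, Nat.zero_mod]
  have h3l : ¬ 3 ∣ l := by omega
  obtain ⟨p, q, r, s, hpr', hqs', h1, h2, h3, h4⟩ := walk_key hcard H l h3l ψ hstep hclosed
  rcases htour p r hpr' with hc1 | hc1 <;> rcases htour q s hqs' with hc2 | hc2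
  · exact iso_T4 hcard H p q r s h1 h2 h3 h4 hc1 hc2
  · exact iso_T4 hcard H s p q r h4 h1 h2 h3 hc2 hc1
  · exact iso_T4 hcard H q r s p h2 h3 h4 h1 hc2 hc1
  · exact iso_T4 hcard H r s p q h3 h4 h1 h2 hc1 hc2
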